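/- The mean squared width of the unit n-cube [0,1]ⁿ equals 1 + 2(n-1)/π; i.e. for u uniform on S^{n-1}, E((Σᵢ|uᵢ|)²) = 1 + 2(n-1)/π. -/

import Mathlib

open Real MeasureTheory Set Metric

noncomputable section

lemma myIoiPow (m : ℕ) (f : ℝ → ℝ) :
    ∫ x : Set.Ioi (0:ℝ), f x ∂(MeasureTheory.Measure.volumeIoiPow m)
      = ∫ r in Set.Ioi (0:ℝ), r ^ m * f r := by
  simp only [Measure.volumeIoiPow, ENNReal.ofReal]
  rw [integral_withDensity_eq_integral_smul ((measurable_subtype_coe.pow_const _).real_toNNReal) _,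
    integral_subtype_comap measurableSet_Ioi fun a ↦ Real.toNNReal (a ^ m) • f a]
  refine setIntegral_congr_fun measurableSet_Ioi fun x hx => ?_
  rw [NNReal.smul_def, Real.coe_toNNReal _ (pow_nonneg hx.out.le _), smul_eq_mul]

lemma polar {E : Type*} [NormedAddCommGroup E] [NormedSpace ℝ E] [MeasurableSpace E]
    [BorelSpace E] [FiniteDimensional ℝ E] [Nontrivial E] (μ : Measure E)
    [μ.IsAddHaarMeasure] (g : E → ℝ) (f : ℝ → ℝ) :
    ∫ x, g (‖x‖⁻¹ • x) * f ‖x‖ ∂μ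
      = (∫ u : sphere (0:E) 1, g u ∂μ.toSphere)
        * ∫ r in Set.Ioi (0:ℝ), r ^ (Module.finrank ℝ E - 1) * f r := by
  calc ∫ x, g (‖x‖⁻¹ • x) * f ‖x‖ ∂μ
      = ∫ x : ({0}ᶜ : Set E), g (‖(x:E)‖⁻¹ • (x:E)) * f ‖(x:E)‖ ∂(μ.comap (↑)) := by
        rw [integral_subtype_comap (measurableSet_singleton _).compl
          fun x : E => g (‖x‖⁻¹ • x) * f ‖x‖, MeasureTheory.restrict_compl_singleton]
    _ = ∫ p : sphere (0:E) 1 × Set.Ioi (0:ℝ), g p.1 * f p.2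
          ∂(μ.toSphere.prod (.volumeIoiPow (Module.finrank ℝ E - 1))) := by
        rw [← μ.measurePreserving_homeomorphUnitSphereProd.integral_comp
          (Homeomorph.measurableEmbedding _) fun p => g (p.1 : E) * f (p.2 : ℝ)]
        simp
    _ = (∫ u : sphere (0:E) 1, g u ∂μ.toSphere)
          * ∫ r : Set.Ioi (0:ℝ), f r ∂(Measure.volumeIoiPow (Module.finrank ℝ E - 1)) :=
        integral_prod_mul (fun u : sphere (0:E) 1 => g u) (fun r : Set.Ioi (0:ℝ) => f r)
    _ = _ := by rw [myIoiPow]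

lemma castk (k : ℕ) : (-1:ℝ) < (k:ℝ) :=
  lt_of_lt_of_le (by norm_num) (Nat.cast_nonneg k)

lemma gIoi (k : ℕ) : ∫ t in Set.Ioi (0:ℝ), t ^ k * exp (-t^2)
    = (1/2) * Real.Gamma (((k:ℝ)+1)/2) := by
  have h := integral_rpow_mul_exp_neg_rpow (p := 2) (q := (k:ℝ)) two_pos (castk k)
  simp only [Real.rpow_natCast] at h
  norm_num at h
  convert h using 3

lemma gR (k : ℕ) : ∫ t : ℝ, |t| ^ k * exp (-t^2) = Real.Gamma (((k:ℝ)+1)/2) := by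
  have h := integral_comp_abs (f := fun s => s ^ k * exp (-s^2))
  simp only [sq_abs] at h
  rw [h, gIoi]
  ring

lemma intR (k : ℕ) : Integrable (fun t : ℝ => |t| ^ k * exp (-t^2)) := by
  have h := integrable_rpow_mul_exp_neg_mul_sq (b := 1) one_pos (s := (k:ℝ)) (castk k)
  simp only [Real.rpow_natCast, neg_mul, one_mul] at h
  have := h.abs
  simpa [abs_mul, abs_pow, abs_of_pos (exp_pos _)] using this

lemma pi0 (n : ℕ) : ∫ x : Fin n → ℝ, ∏ i, exp (-(x i)^2) = √π ^ n := by
  rw [MeasureTheory.volume_pi, MeasureTheory.integral_fintype_prod_eq_pow (fun t : ℝ => exp (-t^2))]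
  have h := gR 0
  simp only [pow_zero, one_mul, Nat.cast_zero, zero_add] at h
  rw [h, Real.Gamma_one_half_eq, Fintype.card_fin]

-- diagonal term
lemma diag (n : ℕ) (i : Fin n) :
    ∫ x : Fin n → ℝ, |x i| * |x i| * ∏ k, exp (-(x k)^2)
      = Real.Gamma (3/2) * √π ^ (n - 1) := by
  have hfe : ∀ x : Fin n → ℝ, |x i| * |x i| * ∏ k, exp (-(x k)^2)
      = ∏ k, (fun t : ℝ => |t| ^ (if k = i then 2 else 0) * exp (-t^2)) (x k) := by
    intro x
    rw [Finset.prod_mul_distrib]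
    congr 1
    rw [show (fun k => |x k| ^ (if k = i then 2 else 0))
        = fun k => (if k = i then |x k| ^ 2 else 1) from funext fun k => by
          split <;> simp]
    rw [Finset.prod_ite_eq' Finset.univ i (fun k => |x k| ^ 2)]
    simp [pow_two]
  calc ∫ x : Fin n → ℝ, |x i| * |x i| * ∏ k, exp (-(x k)^2)
      = ∏ k : Fin n, ∫ t : ℝ, |t| ^ (if k = i then 2 else 0) * exp (-t^2) := by
        simp_rw [hfe]
        exact MeasureTheory.integral_fintype_prod_eq_prod
          (fun k (t : ℝ) => |t| ^ (if k = i then 2 else 0) * exp (-t^2))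
    _ = ∏ k : Fin n, (if k = i then Real.Gamma (3/2) else √π) := by
        refine Finset.prod_congr rfl fun k _ => ?_
        by_cases h : k = i
        · rw [if_pos h, if_pos h, gR]; norm_num
        · rw [if_neg h, if_neg h, gR, Nat.cast_zero, zero_add, Real.Gamma_one_half_eq]
    _ = Real.Gamma (3/2) * √π ^ (n-1) := by
        rw [← Finset.mul_prod_erase Finset.univ _ (Finset.mem_univ i), if_pos rfl]
        congr 1
        rw [Finset.prod_congr rfl (fun k hk => if_neg (Finset.ne_of_mem_erase hk)),
          Finset.prod_const, Finset.card_erase_of_mem (Finset.mem_univ i),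
          Finset.card_univ, Fintype.card_fin]

-- off-diagonal term
lemma offdiag (n : ℕ) (i j : Fin n) (hij : i ≠ j) :
    ∫ x : Fin n → ℝ, |x i| * |x j| * ∏ k, exp (-(x k)^2) = √π ^ (n - 2) := by
  have hfe : ∀ x : Fin n → ℝ, |x i| * |x j| * ∏ k, exp (-(x k)^2)
      = ∏ k, (fun t : ℝ => |t| ^ ((if k = i then 1 else 0) + (if k = j then 1 else 0))
          * exp (-t^2)) (x k) := by
    intro x
    rw [Finset.prod_mul_distrib]
    congr 1
    simp_rw [pow_add]
    rw [Finset.prod_mul_distrib]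
    rw [show (fun k => |x k| ^ (if k = i then 1 else 0))
        = fun k => (if k = i then |x k| else 1) from funext fun k => by split <;> simp]
    rw [show (fun k => |x k| ^ (if k = j then 1 else 0))
        = fun k => (if k = j then |x k| else 1) from funext fun k => by split <;> simp]
    rw [Finset.prod_ite_eq' Finset.univ i (fun k => |x k|),
      Finset.prod_ite_eq' Finset.univ j (fun k => |x k|)]
    simp
  calc ∫ x : Fin n → ℝ, |x i| * |x j| * ∏ k, exp (-(x k)^2)
      = ∏ k : Fin n, ∫ t : ℝ,
          |t| ^ ((if k = i then 1 else 0) + (if k = j then 1 else 0)) * exp (-t^2) := by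
        simp_rw [hfe]
        exact MeasureTheory.integral_fintype_prod_eq_prod
          (fun k (t : ℝ) => |t| ^ ((if k = i then 1 else 0) + (if k = j then 1 else 0))
            * exp (-t^2))
    _ = ∏ k : Fin n, (if k = i then 1 else if k = j then 1 else √π) := by
        refine Finset.prod_congr rfl fun k _ => ?_
        by_cases h1 : k = i
        · rw [if_pos h1, if_pos h1, if_neg (h1 ▸ hij), gR]; norm_num
        · rw [if_neg h1, if_neg h1]
          by_cases h2 : k = j
          · rw [if_pos h2, if_pos h2, gR]; norm_num
          · rw [if_neg h2, if_neg h2, gR, Nat.cast_zero, zero_add, Real.Gamma_one_half_eq]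
    _ = √π ^ (n - 2) := by
        rw [← Finset.mul_prod_erase Finset.univ _ (Finset.mem_univ i), if_pos rfl, one_mul,
          ← Finset.mul_prod_erase _ _ (Finset.mem_erase.2 ⟨hij.symm, Finset.mem_univ j⟩),
          if_neg hij.symm, if_pos rfl, one_mul]
        rw [Finset.prod_congr rfl (fun k hk => ?_), Finset.prod_const,
          Finset.card_erase_of_mem (Finset.mem_erase.2 ⟨hij.symm, Finset.mem_univ j⟩),
          Finset.card_erase_of_mem (Finset.mem_univ i), Finset.card_univ, Fintype.card_fin,
          Nat.sub_sub]
        have hk1 := Finset.ne_of_mem_erase hk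
        have hk2 := Finset.ne_of_mem_erase (Finset.mem_of_mem_erase hk)
        rw [if_neg hk2, if_neg hk1]

lemma term_int (n : ℕ) (i j : Fin n) :
    Integrable (fun x : Fin n → ℝ => |x i| * |x j| * ∏ k, exp (-(x k)^2)) := by
  have key : ∀ x : Fin n → ℝ, |x i| * |x j| * ∏ k, exp (-(x k)^2)
      = ∏ k, (fun t : ℝ => |t| ^ ((if k = i then 1 else 0) + (if k = j then 1 else 0))
          * exp (-t^2)) (x k) := by
    intro x
    rw [Finset.prod_mul_distrib]
    congr 1
    simp_rw [pow_add]
    rw [Finset.prod_mul_distrib]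
    rw [show (fun k => |x k| ^ (if k = i then 1 else 0))
        = fun k => (if k = i then |x k| else 1) from funext fun k => by split <;> simp]
    rw [show (fun k => |x k| ^ (if k = j then 1 else 0))
        = fun k => (if k = j then |x k| else 1) from funext fun k => by split <;> simp]
    rw [Finset.prod_ite_eq' Finset.univ i (fun k => |x k|),
      Finset.prod_ite_eq' Finset.univ j (fun k => |x k|)]
    simp
  simp_rw [key]
  exact Integrable.fintype_prod fun k => intR _

lemma key_pi (n : ℕ) :
    ∫ x : Fin n → ℝ, (∑ i, |x i|)^2 * ∏ k, exp (-(x k)^2)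
      = (n:ℝ) * (Real.Gamma (3/2) * √π ^ (n-1)) + (n:ℝ)*((n:ℝ)-1) * √π ^ (n-2) := by
  have expand : ∀ x : Fin n → ℝ, (∑ i, |x i|)^2 * ∏ k, exp (-(x k)^2)
      = ∑ i, ∑ j, |x i| * |x j| * ∏ k, exp (-(x k)^2) := by
    intro x
    rw [pow_two, Finset.sum_mul_sum, Finset.sum_mul]
    refine Finset.sum_congr rfl fun i _ => ?_
    rw [Finset.sum_mul]
  simp_rw [expand]
  rw [integral_finset_sum _ (fun i _ => integrable_finset_sum _ (fun j _ => term_int n i j))]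
  have step : ∀ i : Fin n, ∫ x : Fin n → ℝ, ∑ j, |x i| * |x j| * ∏ k, exp (-(x k)^2)
      = ∑ j : Fin n, (if i = j then Real.Gamma (3/2) * √π ^ (n-1) else √π ^ (n-2)) := by
    intro i
    rw [integral_finset_sum _ (fun j _ => term_int n i j)]
    refine Finset.sum_congr rfl fun j _ => ?_
    by_cases h : i = j
    · subst h; rw [if_pos rfl]; exact diag n i
    · rw [if_neg h]; exact offdiag n i j h
  simp_rw [step]
  have h1 : ∀ i : Fin n, (∑ j : Fin n, if i = j then Real.Gamma (3/2) * √π ^ (n-1)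
      else √π ^ (n-2))
      = (n:ℝ) * √π ^ (n-2) + (Real.Gamma (3/2) * √π ^ (n-1) - √π ^ (n-2)) := by
    intro i
    rw [show (fun j => if i = j then Real.Gamma (3/2) * √π ^ (n-1) else √π ^ (n-2))
        = fun j => √π ^ (n-2) + (if i = j then Real.Gamma (3/2) * √π ^ (n-1)
            - √π ^ (n-2) else 0) from funext fun j => by split <;> ring]
    rw [Finset.sum_add_distrib, Finset.sum_const,
      Finset.sum_ite_eq Finset.univ i
        (fun _ => Real.Gamma (3/2) * √π ^ (n-1) - √π ^ (n-2)),
      if_pos (Finset.mem_univ i), Finset.card_univ, Fintype.card_fin, nsmul_eq_mul]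
  simp_rw [h1]
  rw [Finset.sum_const, Finset.card_univ, Fintype.card_fin, nsmul_eq_mul]
  ring

/-- The mean squared width of the unit `n`-cube, i.e. the average of `∑ᵢ |uᵢ|` over `u`
uniform on the unit sphere `S^{n-1}`, equals `1 + 2(n-1)/π`. -/
theorem stmt16 (n : ℕ) (hn : 1 ≤ n)
    (μ : Measure (Metric.sphere (0 : EuclideanSpace ℝ (Fin n)) 1))
    (hμ : μ = (volume : Measure (EuclideanSpace ℝ (Fin n))).toSphere) :
    (∫ u : Metric.sphere (0 : EuclideanSpace ℝ (Fin n)) 1,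
        (∑ i, |(u : EuclideanSpace ℝ (Fin n)) i|)^2 ∂μ) / (μ Set.univ).toReal
      = 1 + 2 * ((n : ℝ) - 1) / π := by
  subst hμ
  haveI : Nonempty (Fin n) := Fin.pos_iff_nonempty.mp hn
  haveI : Nontrivial (EuclideanSpace ℝ (Fin n)) := inferInstance
  have hdim : Module.finrank ℝ (EuclideanSpace ℝ (Fin n)) = n := finrank_euclideanSpace_fin
  -- pointwise norms
  have hns : ∀ x : EuclideanSpace ℝ (Fin n), ‖x‖^2 = ∑ i, (x i)^2 := by
    intro x
    rw [EuclideanSpace.norm_eq, Real.sq_sqrt (by positivity)]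
    simp [Real.norm_eq_abs, sq_abs]
  have hnorm : ∀ x : EuclideanSpace ℝ (Fin n),
      exp (-‖x‖^2) = ∏ i, exp (-(x i)^2) := by
    intro x
    rw [hns x, ← Finset.sum_neg_distrib, Real.exp_sum]
  -- the J identity via polar
  have hfg : (fun x : EuclideanSpace ℝ (Fin n) =>
      (fun y : EuclideanSpace ℝ (Fin n) => (∑ i, |y i|)^2) (‖x‖⁻¹ • x)
        * (fun r : ℝ => r^2 * exp (-r^2)) ‖x‖)
      = fun x : EuclideanSpace ℝ (Fin n) => (∑ i, |x i|)^2 * exp (-‖x‖^2) := by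
    funext x
    simp only
    rcases eq_or_ne x 0 with rfl | hx
    · simp
    · have hxn : ‖x‖ ≠ 0 := norm_ne_zero_iff.2 hx
      have : ∀ i, |(‖x‖⁻¹ • x) i| = ‖x‖⁻¹ * |x i| := by
        intro i
        rw [PiLp.smul_apply, smul_eq_mul, abs_mul, abs_of_nonneg (by positivity)]
      simp_rw [this]
      rw [← Finset.mul_sum, mul_pow]
      field_simp
  have hJ := polar (volume : Measure (EuclideanSpace ℝ (Fin n)))
    (fun y => (∑ i, |y i|)^2) (fun r => r^2 * exp (-r^2))
  rw [hfg, hdim] at hJ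
  simp only [] at hJ
  -- the T identity via polar
  have hfg1 : (fun x : EuclideanSpace ℝ (Fin n) =>
      (fun _ : EuclideanSpace ℝ (Fin n) => (1:ℝ)) (‖x‖⁻¹ • x)
        * (fun r : ℝ => exp (-r^2)) ‖x‖)
      = fun x : EuclideanSpace ℝ (Fin n) => exp (-‖x‖^2) := by
    funext x; simp
  have hT := polar (volume : Measure (EuclideanSpace ℝ (Fin n)))
    (fun _ => (1:ℝ)) (fun r => exp (-r^2))
  rw [hfg1, hdim] at hT
  rw [integral_const] at hT
  simp only [smul_eq_mul, mul_one] at hT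
  -- transfer the Euclidean integrals to Pi
  have htrJ : ∫ x : EuclideanSpace ℝ (Fin n), (∑ i, |x i|)^2 * exp (-‖x‖^2)
      = (n:ℝ) * (Real.Gamma (3/2) * √π ^ (n-1)) + (n:ℝ)*((n:ℝ)-1) * √π ^ (n-2) := by
    calc ∫ x : EuclideanSpace ℝ (Fin n), (∑ i, |x i|)^2 * exp (-‖x‖^2)
        = ∫ x : EuclideanSpace ℝ (Fin n), (∑ i, |x i|)^2 * ∏ i, exp (-(x i)^2) := by
          simp_rw [hnorm]
      _ = ∫ y : Fin n → ℝ, (∑ i, |y i|)^2 * ∏ i, exp (-(y i)^2) := by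
          rw [← (EuclideanSpace.volume_preserving_symm_measurableEquiv_toLp (Fin n)).integral_comp'
            (fun y : Fin n → ℝ => (∑ i, |y i|)^2 * ∏ i, exp (-(y i)^2))]
          rfl
      _ = _ := key_pi n
  have htrT : ∫ x : EuclideanSpace ℝ (Fin n), exp (-‖x‖^2) = √π ^ n := by
    calc ∫ x : EuclideanSpace ℝ (Fin n), exp (-‖x‖^2)
        = ∫ x : EuclideanSpace ℝ (Fin n), ∏ i, exp (-(x i)^2) := by simp_rw [hnorm]
      _ = ∫ y : Fin n → ℝ, ∏ i, exp (-(y i)^2) := by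
          rw [← (EuclideanSpace.volume_preserving_symm_measurableEquiv_toLp (Fin n)).integral_comp'
            (fun y : Fin n → ℝ => ∏ i, exp (-(y i)^2))]
          rfl
      _ = _ := pi0 n
  -- radial integrals
  have hR0 : ∫ r in Set.Ioi (0:ℝ), r ^ (n-1) * exp (-r^2)
      = (1/2) * Real.Gamma ((n:ℝ)/2) := by
    rw [gIoi (n-1)]
    congr 2
    rw [Nat.cast_sub hn]
    ring
  have hR1 : ∫ r in Set.Ioi (0:ℝ), r ^ (n-1) * (r^2 * exp (-r^2))
      = (1/2) * (((n:ℝ)/2) * Real.Gamma ((n:ℝ)/2)) := by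
    have : (fun r : ℝ => r ^ (n-1) * (r^2 * exp (-r^2)))
        = fun r : ℝ => r ^ (n+1) * exp (-r^2) := by
      funext r
      rw [← mul_assoc, ← pow_add, show n - 1 + 2 = n + 1 by omega]
    rw [this, gIoi (n+1)]
    congr 1
    rw [show (((n+1:ℕ):ℝ)+1)/2 = (n:ℝ)/2 + 1 by push_cast; ring,
      Real.Gamma_add_one (by positivity)]
  rw [hR0] at hT
  rw [hR1] at hJ
  rw [htrJ] at hJ
  rw [htrT] at hT
  -- final arithmetic
  have hC : (0:ℝ) < √π := Real.sqrt_pos.2 pi_pos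
  have hC2 : (√π)^2 = π := Real.sq_sqrt pi_pos.le
  have hG : (0:ℝ) < Real.Gamma ((n:ℝ)/2) := Real.Gamma_pos_of_pos (by positivity)
  have hΓ32 : Real.Gamma (3/2) = √π / 2 := by
    rw [show (3/2:ℝ) = 1/2 + 1 by norm_num,
      Real.Gamma_add_one (by norm_num), Real.Gamma_one_half_eq]
    ring
  have hR1ne : (1/2) * (((n:ℝ)/2) * Real.Gamma ((n:ℝ)/2)) ≠ 0 := by
    have : (0:ℝ) < (n:ℝ) := by exact_mod_cast hn
    positivity
  have hR0ne : (1/2) * Real.Gamma ((n:ℝ)/2) ≠ 0 := by positivity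
  have hM : ((volume : Measure (EuclideanSpace ℝ (Fin n))).toSphere Set.univ).toReal ≠ 0 := by
    intro h
    rw [measureReal_def, h, zero_mul] at hT
    exact (pow_pos hC n).ne' hT
  have ha : (∫ u : Metric.sphere (0 : EuclideanSpace ℝ (Fin n)) 1,
      (∑ i, |(u : EuclideanSpace ℝ (Fin n)) i|)^2
        ∂(volume : Measure (EuclideanSpace ℝ (Fin n))).toSphere)
      = ((n:ℝ) * (Real.Gamma (3/2) * √π ^ (n-1)) + (n:ℝ)*((n:ℝ)-1) * √π ^ (n-2))
        / ((1/2) * (((n:ℝ)/2) * Real.Gamma ((n:ℝ)/2))) :=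
    (eq_div_iff hR1ne).2 hJ.symm
  have hMeq : (((volume : Measure (EuclideanSpace ℝ (Fin n))).toSphere Set.univ).toReal : ℝ)
      = √π ^ n / ((1/2) * Real.Gamma ((n:ℝ)/2)) :=
    (eq_div_iff hR0ne).2 hT.symm
  rw [ha, hMeq, hΓ32]
  set C := √π with hCdef
  rw [show π = C^2 from hC2.symm]
  have hGhalf : Real.Gamma ((1:ℝ)/2) = C := by rw [hCdef, Real.Gamma_one_half_eq]
  obtain ⟨m, rfl⟩ : ∃ m, n = m + 1 := ⟨n - 1, by omega⟩
  rcases m with _ | m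
  · norm_num
    rw [hGhalf]
    field_simp
  · have e1 : m + 1 + 1 - 1 = m + 1 := rfl
    have e2 : m + 1 + 1 - 2 = m := rfl
    rw [e1, e2]
    push_cast
    field_simp
    ring
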